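/- arXiv:math/0002119 — 7 statements merged into one kernel-verified Lean document; each statement's English description precedes it below -/
import Mathlib

section
/- Let N = (X, T, F, w) be a Petri net, let M be a marking, and let t be a transition that is enabled at M. Let M' be the marking obtained by firing t at M. Then there exists a monomial u ∈ X^Δ (a power product of the places) such that pol(M) = u · l_t and pol(M') = u · r_t, where pol(t) = l_t − r_t; consequently pol(M) − pol(M') = u · pol(t) in ℚ[X]. -/
open MvPolynomial Finset

/-- A Petri net on a set `X` of places and a set `T` of transitions.
`pre x t` is the weight `w(x,t)` of the edge from place `x` to transition `t`,
and `post t x` is the weight `w(t,x)` (weights are `0` off the flow relation). -/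
structure PetriNet (X T : Type*) where
  pre : X → T → ℕ
  post : T → X → ℕ

/-- A transition `t` is enabled at a marking `M` if every place `x` holds
at least `w(x,t)` tokens. -/
def PetriNet.enabled {X T : Type*} (N : PetriNet X T) (t : T) (M : X → ℕ) : Prop :=
  ∀ x, N.pre x t ≤ M x

/-- Firing transition `t` at marking `M` removes `w(x,t)` tokens from each place
and adds `w(t,x)` tokens to each place. -/
def PetriNet.fire {X T : Type*} (N : PetriNet X T) (t : T) (M : X → ℕ) : X → ℕ :=
  fun x => M x - N.pre x t + N.post t x

/-- `M'` is reachable from `M` if some finite sequence of firings of enabled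
transitions transforms `M` into `M'`. -/
def PetriNet.Reachable {X T : Type*} (N : PetriNet X T) : (X → ℕ) → (X → ℕ) → Prop :=
  Relation.ReflTransGen (fun M M' => ∃ t, N.enabled t M ∧ M' = N.fire t M)

/-- The polynomial `pol(M) = ∏ x^(M x)` associated to a marking. -/
noncomputable def polM {X : Type*} [Fintype X] (M : X → ℕ) : MvPolynomial X ℚ :=
  ∏ x, (MvPolynomial.X x : MvPolynomial X ℚ) ^ M x

/-- The monomial `l_t = ∏ x^(w(x,t))` of the inputs of a transition. -/
noncomputable def polIn {X T : Type*} [Fintype X] (N : PetriNet X T) (t : T) :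
    MvPolynomial X ℚ :=
  ∏ x, (MvPolynomial.X x : MvPolynomial X ℚ) ^ N.pre x t

/-- The monomial `r_t = ∏ x^(w(t,x))` of the outputs of a transition. -/
noncomputable def polOut {X T : Type*} [Fintype X] (N : PetriNet X T) (t : T) :
    MvPolynomial X ℚ :=
  ∏ x, (MvPolynomial.X x : MvPolynomial X ℚ) ^ N.post t x

/-- The polynomial `pol(t) = l_t - r_t` associated to a transition. -/
noncomputable def polT {X T : Type*} [Fintype X] (N : PetriNet X T) (t : T) :
    MvPolynomial X ℚ :=
  polIn N t - polOut N t

/-- if `t` is enabled at `M` and `M'` results from firing `t` at `M`,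
then there is a power product `u` with `pol(M) = u·l_t`, `pol(M') = u·r_t`, and
consequently `pol(M) - pol(M') = u·pol(t)` in `ℚ[X]`. -/
theorem firing_polynomial {X T : Type*} [Fintype X] (N : PetriNet X T)
    (M M' : X → ℕ) (t : T) (henabled : N.enabled t M) (hfire : M' = N.fire t M) :
    ∃ u : X →₀ ℕ,
      polM M = (monomial u (1 : ℚ)) * polIn N t ∧
      polM M' = (monomial u (1 : ℚ)) * polOut N t ∧
      polM M - polM M' = (monomial u (1 : ℚ)) * polT N t := by
  refine ⟨Finsupp.equivFunOnFinite.symm (fun x => M x - N.pre x t), ?_, ?_, ?_⟩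
  all_goals
    rw [show (monomial (Finsupp.equivFunOnFinite.symm (fun x => M x - N.pre x t))
        (1 : ℚ) : MvPolynomial X ℚ)
        = ∏ x, (MvPolynomial.X x : MvPolynomial X ℚ) ^ (M x - N.pre x t) by
      rw [monomial_eq, map_one, one_mul, Finsupp.prod_fintype]
      · rfl
      · intro i; exact pow_zero _]
  · rw [polM, polIn, ← Finset.prod_mul_distrib]
    refine Finset.prod_congr rfl fun x _ => ?_
    rw [← pow_add, Nat.sub_add_cancel (henabled x)]
  · rw [polM, polOut, ← Finset.prod_mul_distrib, hfire]
    exact Finset.prod_congr rfl fun x _ => by rw [← pow_add, PetriNet.fire]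
  · rw [polT, mul_sub, polM, polM, polIn, polOut, ← Finset.prod_mul_distrib,
      ← Finset.prod_mul_distrib, hfire]
    congr 1
    · exact Finset.prod_congr rfl fun x _ => by
        rw [← pow_add, Nat.sub_add_cancel (henabled x)]
    · exact Finset.prod_congr rfl fun x _ => by rw [← pow_add, PetriNet.fire]
end

section
/- Let N = (X, T, F, w) be a Petri net and suppose there is a firing sequence M₀ →^{t₁} M₁ →^{t₂} ⋯ →^{tₙ} Mₙ (each tᵢ is enabled at M_{i−1} and firing it yields Mᵢ). Then there exist power products u₁, …, uₙ ∈ X^Δ such that pol(Mₙ) = pol(M₀) − u₁·pol(t₁) − u₂·pol(t₂) − ⋯ − uₙ·pol(tₙ) in ℚ[X]. -/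
open MvPolynomial Finset

lemma monomial_eq_prod' {X : Type*} [Fintype X] (f : X → ℕ) :
    (monomial (Finsupp.equivFunOnFinite.symm f) (1 : ℚ) : MvPolynomial X ℚ) =
      ∏ x, (MvPolynomial.X x : MvPolynomial X ℚ) ^ f x := by
  rw [monomial_eq, C_1, one_mul, Finsupp.prod_fintype]
  · rfl
  · intro x; simp

lemma step_poly {X T : Type*} [Fintype X] (N : PetriNet X T) (t : T) (M : X → ℕ)
    (h : N.enabled t M) :
    polM (N.fire t M) = polM M -
      (monomial (Finsupp.equivFunOnFinite.symm fun x => M x - N.pre x t) (1 : ℚ)) * polT N t := by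
  rw [monomial_eq_prod', polT, polIn, polOut, mul_sub, ← prod_mul_distrib, ← prod_mul_distrib]
  have h1 : ∀ x, (MvPolynomial.X x : MvPolynomial X ℚ) ^ (M x - N.pre x t) *
      MvPolynomial.X x ^ N.pre x t = MvPolynomial.X x ^ M x := by
    intro x; rw [← pow_add, Nat.sub_add_cancel (h x)]
  have h2 : ∀ x, (MvPolynomial.X x : MvPolynomial X ℚ) ^ (M x - N.pre x t) *
      MvPolynomial.X x ^ N.post t x = MvPolynomial.X x ^ (N.fire t M x) := by
    intro x; rw [← pow_add]; rfl
  simp only [h1, h2, polM]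
  ring

/-- given a firing sequence `M₀ →^{t₁} M₁ →^{t₂} ⋯ →^{tₙ} Mₙ`,
there exist power products `u₁, …, uₙ` such that
`pol(Mₙ) = pol(M₀) - u₁·pol(t₁) - ⋯ - uₙ·pol(tₙ)` in `ℚ[X]`. -/
theorem firing_sequence_polynomial {X T : Type*} [Fintype X] (N : PetriNet X T)
    (n : ℕ) (M : Fin (n + 1) → X → ℕ) (t : Fin n → T)
    (hstep : ∀ i : Fin n,
      N.enabled (t i) (M i.castSucc) ∧ M i.succ = N.fire (t i) (M i.castSucc)) :
    ∃ u : Fin n → (X →₀ ℕ),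
      polM (M (Fin.last n)) =
        polM (M 0) - ∑ i : Fin n, (monomial (u i) (1 : ℚ)) * polT N (t i) := by
  induction n with
  | zero =>
    exact ⟨Fin.elim0, by simp⟩
  | succ n ih =>
    obtain ⟨u, hu⟩ := ih (fun i => M i.castSucc) (fun i => t i.castSucc)
      (fun i => by
        have h := hstep i.castSucc
        exact ⟨h.1, by rw [← Fin.succ_castSucc]; exact h.2⟩)
    set v : X →₀ ℕ := Finsupp.equivFunOnFinite.symm
      fun x => M (Fin.last n).castSucc x - N.pre x (t (Fin.last n)) with hv
    refine ⟨Fin.snoc u v, ?_⟩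
    have hlast := hstep (Fin.last n)
    have key : polM (M (Fin.last (n+1))) =
        polM (M (Fin.last n).castSucc) - (monomial v (1 : ℚ)) * polT N (t (Fin.last n)) := by
      have : M (Fin.last (n+1)) = N.fire (t (Fin.last n)) (M (Fin.last n).castSucc) := by
        have := hlast.2
        rwa [Fin.succ_last] at this
      rw [this, step_poly N _ _ hlast.1]
    rw [key, Fin.sum_univ_castSucc]
    simp only [Fin.snoc_castSucc, Fin.snoc_last]
    rw [hu, Fin.castSucc_zero]
    ring
end

section
/- Let N = (X, T, F, w) be a Petri net with initial marking M₀ and let P := {pol(t) : t ∈ T} ⊆ ℚ[X]. If a marking M is reachable from M₀ in N, then pol(M₀) − pol(M) lies in the ideal of ℚ[X] generated by P, i.e. pol(M₀) =_P pol(M). -/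
open MvPolynomial Finset

/-- if a marking `M` is reachable from `M₀`, then
`pol(M₀) - pol(M)` lies in the ideal of `ℚ[X]` generated by
`P = {pol(t) : t ∈ T}`, i.e. `pol(M₀) =_P pol(M)`. -/
theorem reachable_polynomial_equiv {X T : Type*} [Fintype X] (N : PetriNet X T)
    (M₀ M : X → ℕ) (h : N.Reachable M₀ M) :
    polM M₀ - polM M ∈ Ideal.span (Set.range (polT N)) := by
  induction h with
  | refl => simp
  | tail _ hstep ih =>
    rename_i b c _
    obtain ⟨t, hen, rfl⟩ := hstep
    have key : polM b - polM (N.fire t b) =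
        (∏ x, (MvPolynomial.X x : MvPolynomial X ℚ) ^ (b x - N.pre x t)) * polT N t := by
      rw [polT, mul_sub, polIn, polOut, polM, polM, ← Finset.prod_mul_distrib,
        ← Finset.prod_mul_distrib]
      congr 1
      · apply Finset.prod_congr rfl
        intro x _
        rw [← pow_add, Nat.sub_add_cancel (hen x)]
      · apply Finset.prod_congr rfl
        intro x _
        rw [← pow_add, PetriNet.fire]
    have hmem : polM b - polM (N.fire t b) ∈ Ideal.span (Set.range (polT N)) := by
      rw [key]
      exact Ideal.mul_mem_left _ _ (Ideal.subset_span ⟨t, rfl⟩)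
    have : polM M₀ - polM (N.fire t b) =
        (polM M₀ - polM b) + (polM b - polM (N.fire t b)) := by ring
    rw [this]
    exact add_mem ih hmem
end

section
/- (Reachability and Equivalence of Polynomials) Let N = (X, T, F, w) be a reversible Petri net with initial marking M₀, and define P := {pol(t) : t ∈ T} ⊆ ℚ[X]. Then a marking M is reachable from M₀ in N if and only if pol(M₀) =_P pol(M), i.e. if and only if pol(M₀) − pol(M) lies in the ideal of ℚ[X] generated by P. -/
open MvPolynomial Finset

section Aux

variable {X T : Type*} [Fintype X] (N : PetriNet X T)

/-- single-step relation -/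
def PStep (N : PetriNet X T) (M M' : X → ℕ) : Prop :=
  ∃ t, N.enabled t M ∧ M' = N.fire t M

lemma pstep_add_right {a b d : X → ℕ} (h : PStep N a b) : PStep N (a + d) (b + d) := by
  obtain ⟨t, ht, hb⟩ := h
  refine ⟨t, fun x => le_trans (ht x) (by simp), ?_⟩
  funext x
  have h1 := ht x
  have h2 : b x = a x - N.pre x t + N.post t x := by rw [hb]; rfl
  simp only [Pi.add_apply, PetriNet.fire]
  omega

lemma eqvgen_add_right {a b : X → ℕ} (d : X → ℕ)
    (h : Relation.EqvGen (PStep N) a b) :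
    Relation.EqvGen (PStep N) (a + d) (b + d) := by
  induction h with
  | rel x y hxy => exact Relation.EqvGen.rel _ _ (pstep_add_right N hxy)
  | refl x => exact Relation.EqvGen.refl _
  | symm x y _ ih => exact (ih).symm _ _
  | trans x y z _ _ ih1 ih2 => exact ih1.trans _ _ _ ih2

lemma polM_eq_monomial (M : X → ℕ) :
    polM M = MvPolynomial.monomial (Finsupp.equivFunOnFinite.symm M) 1 := by
  rw [MvPolynomial.monomial_eq, map_one, one_mul,
    Finsupp.prod_fintype _ _ (fun i => pow_zero _)]
  rfl

end Aux

section Main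

variable {X T : Type*} [Fintype X] (N : PetriNet X T)

lemma step_sub_mem {M : X → ℕ} {t : T} (ht : N.enabled t M) :
    polM M - polM (N.fire t M) ∈ Ideal.span (Set.range (polT N)) := by
  have h1 : polM M = polM (fun x => M x - N.pre x t) * polIn N t := by
    unfold polM polIn
    rw [← Finset.prod_mul_distrib]
    refine Finset.prod_congr rfl fun x _ => ?_
    rw [← pow_add, Nat.sub_add_cancel (ht x)]
  have h2 : polM (N.fire t M) = polM (fun x => M x - N.pre x t) * polOut N t := by
    unfold polM polOut PetriNet.fire
    rw [← Finset.prod_mul_distrib]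
    refine Finset.prod_congr rfl fun x _ => ?_
    rw [← pow_add]
  rw [h1, h2, ← mul_sub]
  exact Ideal.mul_mem_left _ _ (Ideal.subset_span ⟨t, rfl⟩)

lemma reachable_sub_mem {M₀ M : X → ℕ} (h : N.Reachable M₀ M) :
    polM M₀ - polM M ∈ Ideal.span (Set.range (polT N)) := by
  induction h with
  | refl => simpa using (Ideal.span (Set.range (polT N))).zero_mem
  | tail hab hbc ih =>
    obtain ⟨t, ht, rfl⟩ := hbc
    have := (Ideal.span (Set.range (polT N))).add_mem ih (step_sub_mem N ht)
    simpa using this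

/-- the congruence on `X →₀ ℕ` generated by the steps -/
noncomputable def pCon (N : PetriNet X T) : AddCon (X →₀ ℕ) :=
  addConGen (fun a b => PStep N ⇑a ⇑b)

lemma pCon_to_eqvgen {a b : X →₀ ℕ} (h : pCon N a b) :
    Relation.EqvGen (PStep N) ⇑a ⇑b := by
  induction h with
  | of x y hxy => exact Relation.EqvGen.rel _ _ hxy
  | refl x => exact Relation.EqvGen.refl _
  | symm _ ih => exact ih.symm _ _
  | trans _ _ ih1 ih2 => exact ih1.trans _ _ _ ih2
  | add _ _ ih1 ih2 =>
    rename_i w x y z _ _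
    have h1 : Relation.EqvGen (PStep N) ⇑(w + y) ⇑(x + y) := by
      have := eqvgen_add_right N ⇑y ih1
      simpa [Finsupp.coe_add] using this
    have h2 : Relation.EqvGen (PStep N) ⇑(x + y) ⇑(x + z) := by
      have := eqvgen_add_right N ⇑x ih2
      have e1 : ⇑y + ⇑x = ⇑(x + y) := by rw [add_comm]; simp
      have e2 : ⇑z + ⇑x = ⇑(x + z) := by rw [add_comm]; simp
      rwa [e1, e2] at this
    exact h1.trans _ _ _ h2

noncomputable def pHom (N : PetriNet X T) :
    MvPolynomial X ℚ →+* AddMonoidAlgebra ℚ (pCon N).Quotient :=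
  AddMonoidAlgebra.mapDomainRingHom ℚ (pCon N).mk'

lemma pHom_monomial (d : X →₀ ℕ) :
    pHom N (MvPolynomial.monomial d (1 : ℚ)) = AddMonoidAlgebra.single ((pCon N).mk' d) 1 := by
  rw [← MvPolynomial.single_eq_monomial]
  show AddMonoidAlgebra.mapDomain _ _ = _
  rw [AddMonoidAlgebra.mapDomain_single]

lemma pHom_polT (t : T) : pHom N (polT N t) = 0 := by
  have hin : polIn N t = polM (fun x => N.pre x t) := rfl
  have hout : polOut N t = polM (N.post t) := rfl
  have hstep : PStep N (fun x => N.pre x t) (N.post t) := by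
    refine ⟨t, fun x => le_rfl, ?_⟩
    funext x; simp [PetriNet.fire]
  have hcon : pCon N (Finsupp.equivFunOnFinite.symm (fun x => N.pre x t))
      (Finsupp.equivFunOnFinite.symm (N.post t)) := by
    apply AddConGen.Rel.of
    simpa [Finsupp.coe_equivFunOnFinite_symm] using hstep
  have heq : (pCon N).mk' (Finsupp.equivFunOnFinite.symm (fun x => N.pre x t)) =
      (pCon N).mk' (Finsupp.equivFunOnFinite.symm (N.post t)) := (AddCon.eq _).2 hcon
  unfold polT
  rw [map_sub, hin, hout, polM_eq_monomial, polM_eq_monomial, pHom_monomial, pHom_monomial,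
    heq, sub_self]

lemma mem_to_eqvgen {M₀ M : X → ℕ}
    (h : polM M₀ - polM M ∈ Ideal.span (Set.range (polT N))) :
    Relation.EqvGen (PStep N) M₀ M := by
  have hker : Ideal.span (Set.range (polT N)) ≤ RingHom.ker (pHom N) := by
    rw [Ideal.span_le]
    rintro _ ⟨t, rfl⟩
    exact pHom_polT N t
  have h0 : pHom N (polM M₀ - polM M) = 0 := hker h
  rw [map_sub, polM_eq_monomial, polM_eq_monomial, pHom_monomial, pHom_monomial,
    sub_eq_zero] at h0
  have := AddMonoidAlgebra.single_inj.1 h0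
  rcases this with ⟨heq, -⟩ | ⟨h1, -⟩
  · have hc : pCon N (Finsupp.equivFunOnFinite.symm M₀) (Finsupp.equivFunOnFinite.symm M) :=
      (AddCon.eq _).1 heq
    have := pCon_to_eqvgen N hc
    simpa [Finsupp.coe_equivFunOnFinite_symm] using this
  · exact absurd h1 one_ne_zero

lemma eqvgen_to_reachable
    (hrev : ∀ M M' : X → ℕ, N.Reachable M M' → N.Reachable M' M)
    {M₀ M : X → ℕ} (h : Relation.EqvGen (PStep N) M₀ M) : N.Reachable M₀ M := by
  induction h with
  | rel x y hxy => exact Relation.ReflTransGen.single hxy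
  | refl x => exact Relation.ReflTransGen.refl
  | symm x y _ ih => exact hrev _ _ ih
  | trans x y z _ _ ih1 ih2 => exact ih1.trans ih2

end Main

/-- Reachability and Equivalence of Polynomials: in a reversible
Petri net with initial marking `M₀`, a marking `M` is reachable from `M₀` if and
only if `pol(M₀) - pol(M)` lies in the ideal generated by `P = {pol(t) : t ∈ T}`. -/
theorem reachable_iff_polynomial_equiv {X T : Type*} [Fintype X] (N : PetriNet X T)
    (hrev : ∀ M M' : X → ℕ, N.Reachable M M' → N.Reachable M' M)
    (M₀ M : X → ℕ) :
    N.Reachable M₀ M ↔ polM M₀ - polM M ∈ Ideal.span (Set.range (polT N)) := by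
  constructor
  · exact reachable_sub_mem N
  · exact fun h => eqvgen_to_reachable N hrev (mem_to_eqvgen N h)
end

section
/- Let N = (X, T, F, w) be a reversible Petri net with initial marking M₀ and P := {pol(t) : t ∈ T}. If M is a marking such that pol(M₀) − pol(M) lies in the ideal of ℚ[X] generated by P, then M is reachable from M₀ in N. -/
open MvPolynomial Finset

-- Auxiliary definitions and lemmas

def stepRel {X T : Type*} (N : PetriNet X T) (a b : X → ℕ) : Prop :=
  ∃ t, N.enabled t a ∧ b = N.fire t a

lemma reach_add {X T : Type*} (N : PetriNet X T) {a b : X → ℕ}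
    (h : N.Reachable a b) (c : X → ℕ) : N.Reachable (a + c) (b + c) := by
  induction h with
  | refl => exact .refl
  | tail _ hstep ih =>
      obtain ⟨t, ht, rfl⟩ := hstep
      refine ih.tail ⟨t, fun x => le_trans (ht x) (by simp), ?_⟩
      funext x
      have := ht x
      simp only [PetriNet.fire, Pi.add_apply]
      omega

def reachCon {X T : Type*} (N : PetriNet X T) : AddCon (X → ℕ) where
  r a b := N.Reachable a b ∧ N.Reachable b a
  iseqv := ⟨fun _ => ⟨.refl, .refl⟩, fun h => ⟨h.2, h.1⟩,
    fun h h' => ⟨h.1.trans h'.1, h'.2.trans h.2⟩⟩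
  add' := by
    rintro w x y z ⟨h1, h2⟩ ⟨h3, h4⟩
    have key : ∀ {a b c d : X → ℕ}, N.Reachable a b → N.Reachable c d →
        N.Reachable (a + c) (b + d) := by
      intro a b c d hab hcd
      refine (reach_add N hab c).trans ?_
      have := reach_add N hcd b
      rwa [add_comm c b, add_comm d b] at this
    exact ⟨key h1 h3, key h2 h4⟩

section alg
variable {X T : Type*} [Fintype X] (N : PetriNet X T)

noncomputable abbrev cgen : AddCon (X → ℕ) := addConGen (stepRel N)

open scoped Classical in
noncomputable def phi : MvPolynomial X ℚ →ₐ[ℚ] AddMonoidAlgebra ℚ (cgen N).Quotient :=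
  MvPolynomial.aeval fun x =>
    (AddMonoidAlgebra.single ((cgen N).mk' (Pi.single x 1)) (1 : ℚ) : AddMonoidAlgebra ℚ (cgen N).Quotient)

lemma prod_single_one {G : Type*} [AddCommMonoid G] {ι : Type*} (s : Finset ι) (g : ι → G) :
    (∏ x ∈ s, (AddMonoidAlgebra.single (g x) (1:ℚ) : AddMonoidAlgebra ℚ G) : AddMonoidAlgebra ℚ G)
      = AddMonoidAlgebra.single (∑ x ∈ s, g x) 1 := by
  classical
  induction s using Finset.cons_induction with
  | empty => simp [AddMonoidAlgebra.one_def]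
  | cons a s ha ih =>
      rw [Finset.prod_cons, ih, Finset.sum_cons, AddMonoidAlgebra.single_mul_single, one_mul]

lemma phi_prod (f : X → ℕ) :
    phi N (∏ x, (MvPolynomial.X x : MvPolynomial X ℚ) ^ f x)
      = AddMonoidAlgebra.single ((cgen N).mk' f) 1 := by
  rw [map_prod]
  simp only [map_pow, phi, MvPolynomial.aeval_X, AddMonoidAlgebra.single_pow, one_pow]
  rw [prod_single_one]
  congr 1
  simp only [← map_nsmul, ← map_sum]
  congr 1
  funext y
  simp only [Finset.sum_apply, Pi.smul_apply, Pi.single_apply, smul_eq_mul, mul_ite, mul_one, mul_zero]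
  rw [Finset.sum_eq_single y (fun b _ hb => if_neg fun h => hb h.symm)
    (fun h => absurd (Finset.mem_univ y) h), if_pos rfl]

end alg

/-- in a reversible Petri net, if `pol(M₀) - pol(M)` lies in the
ideal of `ℚ[X]` generated by `P = {pol(t) : t ∈ T}`, then `M` is reachable
from `M₀`. -/
theorem polynomial_equiv_reachable {X T : Type*} [Fintype X] (N : PetriNet X T)
    (hrev : ∀ M M' : X → ℕ, N.Reachable M M' → N.Reachable M' M)
    (M₀ M : X → ℕ)
    (h : polM M₀ - polM M ∈ Ideal.span (Set.range (polT N))) :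
    N.Reachable M₀ M := by
  have hker : ∀ t, phi N (polT N t) = 0 := by
    intro t
    have hstep : stepRel N (fun x => N.pre x t) (fun x => N.post t x) :=
      ⟨t, fun x => le_refl _, funext fun x => by simp [PetriNet.fire]⟩
    have heq : (cgen N).mk' (fun x => N.pre x t) = (cgen N).mk' (fun x => N.post t x) := by
      exact ((cgen N).eq).mpr (AddConGen.Rel.of _ _ hstep)
    simp only [polT, polIn, polOut, map_sub, phi_prod, heq, sub_self]
  have hker' : Ideal.span (Set.range (polT N)) ≤ RingHom.ker (phi N).toRingHom :=
    Ideal.span_le.mpr (by rintro _ ⟨t, rfl⟩; exact hker t)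
  have h0 : phi N (polM M₀ - polM M) = 0 := hker' h
  rw [map_sub] at h0
  have h1 : (AddMonoidAlgebra.single ((cgen N).mk' M₀) (1:ℚ)) = AddMonoidAlgebra.single ((cgen N).mk' M) 1 := by
    have h0' := sub_eq_zero.mp h0
    rwa [polM, polM, phi_prod, phi_prod] at h0'
  have h2 : (cgen N).mk' M₀ = (cgen N).mk' M := by
    rcases AddMonoidAlgebra.single_inj.mp h1 with ⟨h', _⟩ | ⟨h', _⟩
    · exact h'
    · norm_num at h'
  have h3 : cgen N M₀ M := ((cgen N).eq).mp h2
  have h4 : cgen N ≤ reachCon N := by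
    refine AddCon.addConGen_le.mpr fun a b hab => ?_
    have := Relation.ReflTransGen.single hab
    exact ⟨this, hrev _ _ this⟩
  exact (AddCon.le_def.mp h4 h3).1
end

section
/- Let N = (X, T, F, w) be a Petri net and let M₀ and M be markings such that pol(M₀) ≠ pol(M) and pol(M₀) = pol(M) ± u₁·pol(t₁) ± ⋯ ± u_m·pol(t_m) in ℚ[X] for some m ≥ 1, transitions t₁, …, t_m ∈ T, power products u₁, …, u_m ∈ X^Δ, and some choice of signs. Then there exists an index i ∈ {1, …, m} such that either pol(M₀) = uᵢ·lᵢ or pol(M₀) = uᵢ·rᵢ, where pol(tᵢ) = lᵢ − rᵢ with lᵢ = ∏_{x∈X} x^{w(x,tᵢ)} and rᵢ = ∏_{x∈X} x^{w(tᵢ,x)}. -/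
open MvPolynomial Finset

lemma prod_pow_eq_monomial {X : Type*} [Fintype X] (f : X → ℕ) :
    (∏ x, (MvPolynomial.X x : MvPolynomial X ℚ) ^ f x) =
      monomial (Finsupp.equivFunOnFinite.symm f) (1 : ℚ) := by
  set s : X →₀ ℕ := Finsupp.equivFunOnFinite.symm f with hs
  have hsx : ∀ x, s x = f x := fun x => rfl
  rw [← MvPolynomial.prod_X_pow_eq_monomial]
  refine (Finset.prod_subset (Finset.subset_univ s.support) ?_).symm
  intro x _ hx
  rw [← hsx x, Finsupp.notMem_support_iff.mp hx, pow_zero]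

lemma polM_eq {X : Type*} [Fintype X] (M : X → ℕ) :
    polM M = monomial (Finsupp.equivFunOnFinite.symm M) (1 : ℚ) :=
  prod_pow_eq_monomial M

lemma polIn_eq {X T : Type*} [Fintype X] (N : PetriNet X T) (t : T) :
    polIn N t = monomial (Finsupp.equivFunOnFinite.symm (fun x => N.pre x t)) (1 : ℚ) :=
  prod_pow_eq_monomial _

lemma polOut_eq {X T : Type*} [Fintype X] (N : PetriNet X T) (t : T) :
    polOut N t = monomial (Finsupp.equivFunOnFinite.symm (fun x => N.post t x)) (1 : ℚ) :=
  prod_pow_eq_monomial _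

/-- if `pol(M₀) ≠ pol(M)` and
`pol(M₀) = pol(M) ± u₁·pol(t₁) ± ⋯ ± u_m·pol(t_m)` for some `m ≥ 1`, transitions
`t₁, …, t_m`, power products `u₁, …, u_m` and signs `ε₁, …, ε_m ∈ {1, -1}`, then
for some `i` either `pol(M₀) = uᵢ·lᵢ` or `pol(M₀) = uᵢ·rᵢ`, where
`pol(tᵢ) = lᵢ - rᵢ`. -/
theorem exists_matching_monomial {X T : Type*} [Fintype X] (N : PetriNet X T)
    (M₀ M : X → ℕ) (m : ℕ) (hm : 1 ≤ m)
    (t : Fin m → T) (u : Fin m → (X →₀ ℕ)) (ε : Fin m → ℚ)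
    (hsign : ∀ i, ε i = 1 ∨ ε i = -1)
    (hne : polM M₀ ≠ polM M)
    (heq : polM M₀ =
      polM M + ∑ i : Fin m, ε i • ((monomial (u i) (1 : ℚ)) * polT N (t i))) :
    ∃ i : Fin m,
      polM M₀ = (monomial (u i) (1 : ℚ)) * polIn N (t i) ∨
      polM M₀ = (monomial (u i) (1 : ℚ)) * polOut N (t i) := by
  classical
  set d0 := Finsupp.equivFunOnFinite.symm M₀ with hd0
  have h0 : coeff d0 (polM M₀) = 1 := by rw [polM_eq]; simp [coeff_monomial, hd0]
  have hM : coeff d0 (polM M) = 0 := by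
    rw [polM_eq, coeff_monomial]
    split_ifs with h
    · exact absurd (by rw [polM_eq M₀, polM_eq M, h]) hne
    · rfl
  by_contra hc
  push_neg at hc
  have hterm : ∀ i, coeff d0 ((monomial (u i) (1 : ℚ)) * polT N (t i)) = 0 := by
    intro i
    obtain ⟨h1, h2⟩ := hc i
    have hin : coeff d0 ((monomial (u i) (1 : ℚ)) * polIn N (t i)) = 0 := by
      rw [polIn_eq, monomial_mul, one_mul, coeff_monomial]
      split_ifs with h
      · exact absurd (by rw [polM_eq M₀, polIn_eq, monomial_mul, one_mul, h]) h1
      · rfl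
    have hout : coeff d0 ((monomial (u i) (1 : ℚ)) * polOut N (t i)) = 0 := by
      rw [polOut_eq, monomial_mul, one_mul, coeff_monomial]
      split_ifs with h
      · exact absurd (by rw [polM_eq M₀, polOut_eq, monomial_mul, one_mul, h]) h2
      · rfl
    have : (monomial (u i) (1 : ℚ)) * polT N (t i) =
        (monomial (u i) (1 : ℚ)) * polIn N (t i) -
        (monomial (u i) (1 : ℚ)) * polOut N (t i) := by
      rw [polT, mul_sub]
    rw [this, coeff_sub, hin, hout, sub_zero]
  have := congrArg (coeff d0) heq
  rw [h0, coeff_add, hM, coeff_sum, zero_add] at this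
  simp only [coeff_smul, hterm, smul_zero, Finset.sum_const_zero] at this
  exact one_ne_zero this
end

section
/- (Gröbner bases for coloured Petri nets, folded form) Let N_C = (X, T, C, F, w) be a coloured Petri net with a finite set C of colours that is reversible, let M₀ be an initial marking, and define P := {pol(t) : t ∈ T} ⊆ ℚ[X × C], where for a coloured marking M the associated polynomial is pol(M) := ∏_{(x,c) ∈ X×C} (x,c)^{M(x)(c)} and for a transition t it is pol(t) := ∏_{(x,c)} (x,c)^{w(x,t)(c)} − ∏_{(x,c)} (x,c)^{w(t,x)(c)}. Then a coloured marking M is reachable from M₀ in N_C if and only if pol(M₀) − pol(M) lies in the ideal of ℚ[X × C] generated by P. -/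
open MvPolynomial Finset

/-- A coloured Petri net: `pre x t c` is the multiplicity `w(x,t)(c)` of colour
`c` in the power product of colours labelling the edge from place `x` to
transition `t`, and `post t x c` is `w(t,x)(c)` (empty off the flow relation). -/
structure ColouredPetriNet (X T C : Type*) where
  pre : X → T → C → ℕ
  post : T → X → C → ℕ

/-- A transition `t` is enabled at a coloured marking `M` if for every place `x`
the power product `M x` is a multiple of `w(x,t)`. -/
def ColouredPetriNet.enabled {X T C : Type*} (N : ColouredPetriNet X T C)
    (t : T) (M : X → C → ℕ) : Prop :=
  ∀ x c, N.pre x t c ≤ M x c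

/-- Firing transition `t` at coloured marking `M` deletes `w(x,t)` from each
place and appends `w(t,x)`. -/
def ColouredPetriNet.fire {X T C : Type*} (N : ColouredPetriNet X T C)
    (t : T) (M : X → C → ℕ) : X → C → ℕ :=
  fun x c => M x c - N.pre x t c + N.post t x c

/-- Coloured reachability: a finite sequence of firings transforms `M` into `M'`. -/
def ColouredPetriNet.Reachable {X T C : Type*} (N : ColouredPetriNet X T C) :
    (X → C → ℕ) → (X → C → ℕ) → Prop :=
  Relation.ReflTransGen (fun M M' => ∃ t, N.enabled t M ∧ M' = N.fire t M)

/-- `pol(M) = ∏_{(x,c)} (x,c)^(M x c)` in `ℚ[X × C]` for a coloured marking. -/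
noncomputable def polCM {X C : Type*} [Fintype X] [Fintype C] (M : X → C → ℕ) :
    MvPolynomial (X × C) ℚ :=
  ∏ p : X × C, (MvPolynomial.X p : MvPolynomial (X × C) ℚ) ^ M p.1 p.2

/-- `pol(t) = ∏_{(x,c)} (x,c)^(w(x,t)(c)) - ∏_{(x,c)} (x,c)^(w(t,x)(c))`
in `ℚ[X × C]` for a transition of a coloured Petri net. -/
noncomputable def polCT {X T C : Type*} [Fintype X] [Fintype C]
    (N : ColouredPetriNet X T C) (t : T) : MvPolynomial (X × C) ℚ :=
  (∏ p : X × C, (MvPolynomial.X p : MvPolynomial (X × C) ℚ) ^ N.pre p.1 t p.2) -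
  (∏ p : X × C, (MvPolynomial.X p : MvPolynomial (X × C) ℚ) ^ N.post t p.1 p.2)

section Aux

set_option linter.unusedSectionVars false

variable {σ T : Type*} [Fintype σ]

/-- One firing step of an abstract net on places `σ`. -/
def Step' (pre post : T → σ → ℕ) (m m' : σ → ℕ) : Prop :=
  ∃ t, (∀ p, pre t p ≤ m p) ∧ m' = fun p => m p - pre t p + post t p

/-- Reachability for the abstract net. -/
def Reach' (pre post : T → σ → ℕ) : (σ → ℕ) → (σ → ℕ) → Prop :=
  Relation.ReflTransGen (Step' pre post)

lemma reach'_add_right {pre post : T → σ → ℕ} {m m' : σ → ℕ} (w : σ → ℕ)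
    (h : Reach' pre post m m') :
    Reach' pre post (fun p => m p + w p) (fun p => m' p + w p) := by
  induction h with
  | refl => exact Relation.ReflTransGen.refl
  | tail _ hstep ih =>
    obtain ⟨t, ht, rfl⟩ := hstep
    refine ih.tail ⟨t, fun p => le_trans (ht p) (Nat.le_add_right _ _), ?_⟩
    funext p; dsimp only; have := ht p; omega

lemma reach'_add {pre post : T → σ → ℕ} {a b u v : σ → ℕ}
    (h1 : Reach' pre post a b) (h2 : Reach' pre post u v) :
    Reach' pre post (fun p => a p + u p) (fun p => b p + v p) := by
  refine (reach'_add_right u h1).trans ?_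
  have := reach'_add_right b h2
  simpa [Nat.add_comm, Reach'] using this

lemma prod_X_pow_eq_monomial' (m : σ → ℕ) :
    (∏ p, (MvPolynomial.X p : MvPolynomial σ ℚ) ^ m p) =
      MvPolynomial.monomial (Finsupp.equivFunOnFinite.symm m) 1 := by
  rw [MvPolynomial.monomial_eq, MvPolynomial.C_1, one_mul, Finsupp.prod]
  have h : ∀ p ∈ Finset.univ, p ∉ (Finsupp.equivFunOnFinite.symm m).support →
      (MvPolynomial.X p : MvPolynomial σ ℚ) ^ (Finsupp.equivFunOnFinite.symm m) p = 1 := by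
    intro p _ hp
    rw [Finsupp.notMem_support_iff.mp hp, pow_zero]
  rw [Finset.prod_subset (Finset.subset_univ _) h]
  rfl

lemma step_pol_mem {pre post : T → σ → ℕ} {m m' : σ → ℕ} (h : Step' pre post m m') :
    (∏ p, (MvPolynomial.X p : MvPolynomial σ ℚ) ^ m p) - ∏ p, (X p : MvPolynomial σ ℚ) ^ m' p ∈
      Ideal.span (Set.range fun t =>
        (∏ p, (MvPolynomial.X p : MvPolynomial σ ℚ) ^ pre t p) -
        ∏ p, (X p : MvPolynomial σ ℚ) ^ post t p) := by
  obtain ⟨t, ht, rfl⟩ := h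
  have h1 : (∏ p, (MvPolynomial.X p : MvPolynomial σ ℚ) ^ m p)
      = (∏ p, (X p : MvPolynomial σ ℚ) ^ (m p - pre t p)) *
        ∏ p, (X p : MvPolynomial σ ℚ) ^ pre t p := by
    rw [← Finset.prod_mul_distrib]
    refine Finset.prod_congr rfl fun p _ => ?_
    rw [← pow_add]; congr 1; have := ht p; omega
  have h2 : (∏ p, (MvPolynomial.X p : MvPolynomial σ ℚ) ^ (m p - pre t p + post t p))
      = (∏ p, (X p : MvPolynomial σ ℚ) ^ (m p - pre t p)) *
        ∏ p, (X p : MvPolynomial σ ℚ) ^ post t p := by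
    rw [← Finset.prod_mul_distrib]
    exact Finset.prod_congr rfl fun p _ => (pow_add _ _ _)
  rw [h1, h2, ← mul_sub]
  exact Ideal.mul_mem_left _ _ (Ideal.subset_span ⟨t, rfl⟩)

/-- Congruence-generated relation implies reachability, given symmetry of reachability. -/
lemma rel_to_reach {pre post : T → σ → ℕ}
    (hsymm : ∀ m m', Reach' pre post m m' → Reach' pre post m' m)
    {a b : σ →₀ ℕ}
    (h : AddConGen.Rel (fun a b => ∃ t, a = Finsupp.equivFunOnFinite.symm (pre t) ∧
        b = Finsupp.equivFunOnFinite.symm (post t)) a b) :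
    Reach' pre post a b := by
  induction h with
  | of x y hxy =>
    obtain ⟨t, rfl, rfl⟩ := hxy
    have hbase : Reach' pre post (pre t) (post t) :=
      Relation.ReflTransGen.single ⟨t, fun p => le_refl _, by funext p; omega⟩
    have e1 : (⇑(Finsupp.equivFunOnFinite.symm (pre t)) : σ → ℕ) = pre t :=
      Finsupp.equivFunOnFinite.apply_symm_apply (pre t)
    have e2 : (⇑(Finsupp.equivFunOnFinite.symm (post t)) : σ → ℕ) = post t :=
      Finsupp.equivFunOnFinite.apply_symm_apply (post t)
    rw [e1, e2]; exact hbase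
  | refl x => exact Relation.ReflTransGen.refl
  | symm _ ih => exact hsymm _ _ ih
  | trans _ _ ih1 ih2 => exact ih1.trans ih2
  | @add w x y z _ _ ih1 ih2 =>
    have h3 := reach'_add ih1 ih2
    have e1 : (⇑(w + y) : σ → ℕ) = fun p => w p + y p := by funext p; simp
    have e2 : (⇑(x + z) : σ → ℕ) = fun p => x p + z p := by funext p; simp
    rw [e1, e2]; exact h3

end Aux

section Bridge

variable {X T C : Type*} [Fintype X] [Fintype C]

def npre (N : ColouredPetriNet X T C) : T → (X × C) → ℕ := fun t p => N.pre p.1 t p.2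
def npost (N : ColouredPetriNet X T C) : T → (X × C) → ℕ := fun t p => N.post t p.1 p.2

lemma bridge1 (N : ColouredPetriNet X T C) (m m' : (X × C) → ℕ)
    (h : Reach' (npre N) (npost N) m m') :
    N.Reachable (fun x c => m (x, c)) (fun x c => m' (x, c)) := by
  induction h with
  | refl => exact Relation.ReflTransGen.refl
  | tail _ hstep ih =>
    obtain ⟨t, ht, rfl⟩ := hstep
    exact ih.tail ⟨t, fun x c => ht (x, c), rfl⟩

lemma bridge2 (N : ColouredPetriNet X T C) (A B : X → C → ℕ)
    (h : N.Reachable A B) :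
    Reach' (npre N) (npost N) (fun p => A p.1 p.2) (fun p => B p.1 p.2) := by
  induction h with
  | refl => exact Relation.ReflTransGen.refl
  | tail _ hstep ih =>
    obtain ⟨t, ht, rfl⟩ := hstep
    exact ih.tail ⟨t, fun p => ht p.1 p.2, rfl⟩

end Bridge

/-- Gröbner bases for coloured Petri nets, folded form: in a
reversible coloured Petri net with finitely many colours and initial marking
`M₀`, a coloured marking `M` is reachable from `M₀` if and only if
`pol(M₀) - pol(M)` lies in the ideal of `ℚ[X × C]` generated by
`P = {pol(t) : t ∈ T}`. -/
theorem coloured_reachable_iff_polynomial_equiv {X T C : Type*}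
    [Fintype X] [Fintype C] (N : ColouredPetriNet X T C)
    (hrev : ∀ M M' : X → C → ℕ, N.Reachable M M' → N.Reachable M' M)
    (M₀ M : X → C → ℕ) :
    N.Reachable M₀ M ↔ polCM M₀ - polCM M ∈ Ideal.span (Set.range (polCT N)) := by
  constructor
  · intro h
    induction h with
    | refl => simp
    | @tail b c' _ hbc ih =>
      have hstep : Step' (npre N) (npost N) (fun p => b p.1 p.2) (fun p => c' p.1 p.2) := by
        obtain ⟨t, ht, rfl⟩ := hbc
        exact ⟨t, fun p => ht p.1 p.2, rfl⟩
      have h2 : polCM b - polCM c' ∈ Ideal.span (Set.range (polCT N)) :=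
        step_pol_mem (σ := X × C) hstep
      have e : polCM M₀ - polCM c' = (polCM M₀ - polCM b) + (polCM b - polCM c') := by ring
      rw [e]
      exact Ideal.add_mem _ ih h2
  · intro hmem
    set r : ((X × C) →₀ ℕ) → ((X × C) →₀ ℕ) → Prop := fun a b =>
      ∃ t, a = Finsupp.equivFunOnFinite.symm (npre N t) ∧
        b = Finsupp.equivFunOnFinite.symm (npost N t) with hr
    let cgr : AddCon ((X × C) →₀ ℕ) := addConGen r
    let φ : MvPolynomial (X × C) ℚ →+* AddMonoidAlgebra ℚ cgr.Quotient :=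
      AddMonoidAlgebra.mapDomainRingHom ℚ cgr.mk'
    have hφmono : ∀ u : (X × C) →₀ ℕ,
        φ (MvPolynomial.monomial u 1) = AddMonoidAlgebra.single ((u : cgr.Quotient)) 1 := by
      intro u
      rw [← MvPolynomial.single_eq_monomial]
      show AddMonoidAlgebra.mapDomain (⇑cgr.mk') (AddMonoidAlgebra.single u 1) = _
      rw [AddMonoidAlgebra.mapDomain_single]
      rfl
    have hgen : ∀ t, φ (polCT N t) = 0 := by
      intro t
      have e1 : polCT N t =
          MvPolynomial.monomial (Finsupp.equivFunOnFinite.symm (npre N t)) 1 -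
          MvPolynomial.monomial (Finsupp.equivFunOnFinite.symm (npost N t)) 1 := by
        rw [polCT, ← prod_X_pow_eq_monomial', ← prod_X_pow_eq_monomial']
        rfl
      rw [e1, map_sub, hφmono, hφmono]
      have hq : ((Finsupp.equivFunOnFinite.symm (npre N t) : ((X × C) →₀ ℕ)) : cgr.Quotient)
          = ((Finsupp.equivFunOnFinite.symm (npost N t) : ((X × C) →₀ ℕ)) : cgr.Quotient) :=
        (AddCon.eq cgr).mpr (AddConGen.Rel.of _ _ ⟨t, rfl, rfl⟩)
      rw [hq, sub_self]
    have hker : Ideal.span (Set.range (polCT N)) ≤ RingHom.ker φ :=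
      Ideal.span_le.mpr (by rintro _ ⟨t, rfl⟩; exact hgen t)
    have h0 : φ (polCM M₀ - polCM M) = 0 := hker hmem
    have e0 : polCM M₀ = MvPolynomial.monomial
        (Finsupp.equivFunOnFinite.symm fun p : X × C => M₀ p.1 p.2) 1 :=
      prod_X_pow_eq_monomial' _
    have e1 : polCM M = MvPolynomial.monomial
        (Finsupp.equivFunOnFinite.symm fun p : X × C => M p.1 p.2) 1 :=
      prod_X_pow_eq_monomial' _
    rw [e0, e1, map_sub, hφmono, hφmono, sub_eq_zero] at h0
    have hq : (((Finsupp.equivFunOnFinite.symm fun p : X × C => M₀ p.1 p.2) :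
        ((X × C) →₀ ℕ)) : cgr.Quotient) =
        (((Finsupp.equivFunOnFinite.symm fun p : X × C => M p.1 p.2) :
        ((X × C) →₀ ℕ)) : cgr.Quotient) := by
      rcases AddMonoidAlgebra.single_inj.mp h0 with ⟨h, _⟩ | ⟨h, _⟩
      · exact h
      · exact absurd h one_ne_zero
    have hrel : AddConGen.Rel r _ _ := (AddCon.eq cgr).mp hq
    have hsymm : ∀ m m', Reach' (npre N) (npost N) m m' → Reach' (npre N) (npost N) m' m :=
      fun m m' h => bridge2 N _ _ (hrev _ _ (bridge1 N _ _ h))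
    have hreach := rel_to_reach hsymm hrel
    have e2 : (⇑(Finsupp.equivFunOnFinite.symm fun p : X × C => M₀ p.1 p.2) : (X × C) → ℕ)
        = fun p : X × C => M₀ p.1 p.2 := Finsupp.equivFunOnFinite.apply_symm_apply _
    have e3 : (⇑(Finsupp.equivFunOnFinite.symm fun p : X × C => M p.1 p.2) : (X × C) → ℕ)
        = fun p : X × C => M p.1 p.2 := Finsupp.equivFunOnFinite.apply_symm_apply _
    rw [e2, e3] at hreach
    exact bridge1 N _ _ hreach
end
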